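/- For every real A > 4 and every integer q ≥ 1 there exists a constant C = C(A,q) such that for all real t ≥ 1: ∑ 1/(1 + ‖(t³x₁/q², t·x₂/q², t⁻¹x₃/q², t⁻³x₄/q²)‖₂^A) ≤ C · t^{−(A−6)}, where the sum runs over all integer quadruples (x₁,x₂,x₃,x₄) ∈ ℤ⁴ with (x₁,x₂) ≠ (0,0) and ‖·‖₂ denotes the Euclidean norm on ℝ⁴. -/

import Mathlib

set_option maxHeartbeats 1000000
open Real

lemma tail_inv_sq (N : ℕ) (hN : 1 ≤ N) :
    ∑' n : ℕ, (if N < n then ((n : ℝ) ^ 2)⁻¹ else 0) ≤ (N : ℝ)⁻¹ := by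
  apply Real.tsum_le_of_sum_range_le (fun n => by positivity)
  intro M
  calc ∑ n ∈ Finset.range M, (if N < n then ((n : ℝ) ^ 2)⁻¹ else 0)
      = ∑ n ∈ (Finset.range M).filter (fun n => N < n), ((n : ℝ) ^ 2)⁻¹ :=
        (Finset.sum_filter _ _).symm
    _ ≤ ∑ n ∈ Finset.Ioc N (max N M), ((n : ℝ) ^ 2)⁻¹ := by
        apply Finset.sum_le_sum_of_subset_of_nonneg
        · intro x hx
          simp only [Finset.mem_filter, Finset.mem_range] at hx
          simp only [Finset.mem_Ioc]
          omega
        · intros; positivity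
    _ ≤ (N : ℝ)⁻¹ - ((max N M : ℕ) : ℝ)⁻¹ := sum_Ioc_inv_sq_le_sub (by omega) (le_max_left _ _)
    _ ≤ (N : ℝ)⁻¹ := by
        have : (0:ℝ) ≤ ((max N M : ℕ) : ℝ)⁻¹ := by positivity
        linarith

lemma rpow_neg_two_eq (n : ℕ) : (n : ℝ) ^ (-2 : ℝ) = ((n : ℝ) ^ 2)⁻¹ := by
  rw [show (-2 : ℝ) = -((2:ℕ):ℝ) by norm_num, Real.rpow_neg (by positivity),
    Real.rpow_natCast]

lemma tail_rpow (N : ℕ) (hN : 1 ≤ N) {s : ℝ} (hs : 2 ≤ s) :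
    Summable (fun n : ℕ => if N < n then (n : ℝ) ^ (-s) else 0) ∧
    ∑' n : ℕ, (if N < n then (n : ℝ) ^ (-s) else 0) ≤ (N : ℝ) ^ (1 - s) := by
  have hN0 : (0:ℝ) < N := by exact_mod_cast hN
  have hsum2 : Summable (fun n : ℕ => if N < n then ((n : ℝ) ^ 2)⁻¹ else 0) := by
    have h2 : Summable (fun n : ℕ => ((n : ℝ) ^ 2)⁻¹) :=
      (Real.summable_nat_rpow.mpr (by norm_num : (-2:ℝ) < -1)).congr rpow_neg_two_eq
    exact h2.of_nonneg_of_le (fun n => by positivity)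
      (fun n => by split <;> [exact le_rfl; positivity])
  have hsum2' : Summable (fun n : ℕ => (N:ℝ) ^ (2 - s) * (if N < n then ((n : ℝ) ^ 2)⁻¹ else 0)) :=
    hsum2.mul_left _
  have hle : ∀ n : ℕ, (if N < n then (n : ℝ) ^ (-s) else 0)
      ≤ (N:ℝ) ^ (2 - s) * (if N < n then ((n : ℝ) ^ 2)⁻¹ else 0) := by
    intro n
    split
    next h =>
      have hn0 : (0:ℝ) < n := lt_trans hN0 (by exact_mod_cast h)
      have heq : (n : ℝ) ^ (-s) = (n:ℝ) ^ (2 - s) * (n:ℝ) ^ (-2:ℝ) := by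
        rw [← Real.rpow_add hn0]; ring_nf
      rw [heq, rpow_neg_two_eq]
      apply mul_le_mul_of_nonneg_right _ (by positivity)
      exact Real.rpow_le_rpow_of_nonpos hN0 (by exact_mod_cast h.le) (by linarith)
    next => simp
  have hsumL : Summable (fun n : ℕ => if N < n then (n : ℝ) ^ (-s) else 0) :=
    hsum2'.of_nonneg_of_le (fun n : ℕ => show (0:ℝ) ≤ (if N < n then (n : ℝ) ^ (-s) else 0) by
      split
      · exact Real.rpow_nonneg (Nat.cast_nonneg _) _
      · exact le_rfl) hle
  refine ⟨hsumL, ?_⟩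
  calc ∑' n : ℕ, (if N < n then (n : ℝ) ^ (-s) else 0)
      ≤ ∑' n : ℕ, (N:ℝ) ^ (2 - s) * (if N < n then ((n : ℝ) ^ 2)⁻¹ else 0) :=
        Summable.tsum_le_tsum hle hsumL hsum2'
    _ = (N:ℝ) ^ (2 - s) * ∑' n : ℕ, (if N < n then ((n : ℝ) ^ 2)⁻¹ else 0) := tsum_mul_left
    _ ≤ (N:ℝ) ^ (2 - s) * (N:ℝ)⁻¹ :=
        mul_le_mul_of_nonneg_left (tail_inv_sq N hN) (by positivity)
    _ = (N:ℝ) ^ (1 - s) := by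
        rw [← Real.rpow_neg_one (N:ℝ), ← Real.rpow_add hN0]; ring_nf

lemma oneD_nat {A u lam : ℝ} (hA : 4 < A) (hu : 0 < u) (hlam : 0 < lam)
    (hle : lam ≤ u ^ (A⁻¹)) :
    Summable (fun n : ℕ => (u + (lam * n) ^ A) ^ (-(2:ℝ)⁻¹)) ∧
    ∑' n : ℕ, (u + (lam * n) ^ A) ^ (-(2:ℝ)⁻¹) ≤ 4 * lam⁻¹ * u ^ (A⁻¹ - 2⁻¹) := by
  have hA0 : (0:ℝ) < A := by linarith
  have hAne : A ≠ 0 := ne_of_gt hA0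
  set s : ℝ := A / 2 with hs_def
  have hs : 2 ≤ s := by rw [hs_def]; linarith
  set r : ℝ := u ^ (A⁻¹) / lam with hr_def
  have hupos : 0 < u ^ (A⁻¹) := Real.rpow_pos_of_pos hu _
  have hr1 : 1 ≤ r := (one_le_div hlam).mpr hle
  have hr0 : 0 < r := by linarith
  set N : ℕ := ⌈r⌉₊ with hN_def
  have hN1 : 1 ≤ N := Nat.one_le_iff_ne_zero.mpr (by
    have := Nat.ceil_pos.mpr hr0; omega)
  have hrN : r ≤ N := Nat.le_ceil r
  have hNr : (N : ℝ) ≤ r + 1 := (Nat.ceil_lt_add_one hr0.le).le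
  have hN0 : (0:ℝ) < N := by exact_mod_cast hN1
  have htail := tail_rpow N hN1 hs
  set h1 : ℕ → ℝ := fun n => if n ≤ N then u ^ (-(2:ℝ)⁻¹) else 0 with h1_def
  set h2 : ℕ → ℝ := fun n => lam ^ (-s) * (if N < n then (n : ℝ) ^ (-s) else 0) with h2_def
  have h1val : ∀ n : ℕ, n ≤ N → h1 n = u ^ (-(2:ℝ)⁻¹) := by
    intro n hn; simp only [h1_def]; rw [if_pos hn]
  have h1val' : ∀ n : ℕ, ¬ n ≤ N → h1 n = 0 := by
    intro n hn; simp only [h1_def]; rw [if_neg hn]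
  have h2val : ∀ n : ℕ, N < n → h2 n = lam ^ (-s) * (n : ℝ) ^ (-s) := by
    intro n hn; simp only [h2_def]; rw [if_pos hn]
  have h2nn : ∀ n : ℕ, 0 ≤ h2 n := by
    intro n; simp only [h2_def]; split <;> positivity
  have h1nn : ∀ n : ℕ, 0 ≤ h1 n := by
    intro n; simp only [h1_def]; split <;> positivity
  have hg_le : ∀ n : ℕ, (u + (lam * n) ^ A) ^ (-(2:ℝ)⁻¹) ≤ h1 n + h2 n := by
    intro n
    by_cases hn : n ≤ N
    · have hb : (u + (lam * n) ^ A) ^ (-(2:ℝ)⁻¹) ≤ u ^ (-(2:ℝ)⁻¹) :=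
        Real.rpow_le_rpow_of_nonpos hu (le_add_of_nonneg_right (by positivity)) (by norm_num)
      rw [h1val n hn]
      have := h2nn n; linarith
    · push_neg at hn
      have hn0 : (0:ℝ) < n := lt_trans hN0 (by exact_mod_cast hn)
      have hx : (0:ℝ) < lam * n := by positivity
      have hxA : (0:ℝ) < (lam * n) ^ A := Real.rpow_pos_of_pos hx _
      have step1 : (u + (lam * n) ^ A) ^ (-(2:ℝ)⁻¹) ≤ ((lam * n) ^ A) ^ (-(2:ℝ)⁻¹) :=
        Real.rpow_le_rpow_of_nonpos hxA (le_add_of_nonneg_left hu.le) (by norm_num)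
      have step2 : ((lam * n) ^ A) ^ (-(2:ℝ)⁻¹) = (lam * n) ^ (-s) := by
        rw [← Real.rpow_mul hx.le, hs_def]; norm_num; congr 1; ring
      have step3 : (lam * n) ^ (-s) = lam ^ (-s) * (n:ℝ) ^ (-s) :=
        Real.mul_rpow hlam.le hn0.le
      rw [h1val' n (by omega), h2val n hn, zero_add, ← step3, ← step2]
      exact step1
  have hsum1 : Summable h1 := by
    apply summable_of_ne_finset_zero (s := Finset.range (N + 1))
    intro n hn
    simp only [Finset.mem_range] at hn
    exact h1val' n (by omega)
  have hsum2 : Summable h2 := htail.1.mul_left _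
  have hgnn : ∀ n : ℕ, 0 ≤ (u + (lam * n) ^ A) ^ (-(2:ℝ)⁻¹) :=
    fun n => Real.rpow_nonneg (by positivity) _
  have hsumg : Summable (fun n : ℕ => (u + (lam * n) ^ A) ^ (-(2:ℝ)⁻¹)) :=
    (hsum1.add hsum2).of_nonneg_of_le hgnn hg_le
  refine ⟨hsumg, ?_⟩
  have ht1 : ∑' n, h1 n ≤ 3 * lam⁻¹ * u ^ (A⁻¹ - 2⁻¹) := by
    have e0 : ∑' n, h1 n = ∑ n ∈ Finset.range (N + 1), h1 n := by
      apply tsum_eq_sum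
      intro n hn
      simp only [Finset.mem_range] at hn
      exact h1val' n (by omega)
    have e1 : ∑ n ∈ Finset.range (N + 1), h1 n = ((N:ℝ) + 1) * u ^ (-(2:ℝ)⁻¹) := by
      rw [Finset.sum_congr rfl (fun n hn => h1val n (by
        simp only [Finset.mem_range] at hn; omega)), Finset.sum_const, Finset.card_range,
        nsmul_eq_mul]
      push_cast; ring
    rw [e0, e1]
    have hb : (N + 1 : ℝ) ≤ 3 * r := by linarith
    have husplit : u ^ (A⁻¹ - 2⁻¹) = u ^ (A⁻¹) * u ^ (-(2:ℝ)⁻¹) := by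
      rw [← Real.rpow_add hu]; ring_nf
    calc ((N:ℝ) + 1) * u ^ (-(2:ℝ)⁻¹) ≤ 3 * r * u ^ (-(2:ℝ)⁻¹) :=
          mul_le_mul_of_nonneg_right hb (Real.rpow_nonneg hu.le _)
      _ = 3 * lam⁻¹ * u ^ (A⁻¹ - 2⁻¹) := by
          rw [husplit, hr_def]; field_simp
  have ht2 : ∑' n, h2 n ≤ lam⁻¹ * u ^ (A⁻¹ - 2⁻¹) := by
    have e0 : ∑' n, h2 n = lam ^ (-s) * ∑' n : ℕ, (if N < n then (n : ℝ) ^ (-s) else 0) := by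
      simp only [h2_def]; exact tsum_mul_left
    rw [e0]
    have hNs : (N:ℝ) ^ (1 - s) ≤ r ^ (1 - s) :=
      Real.rpow_le_rpow_of_nonpos hr0 hrN (by linarith)
    have hfinal : lam ^ (-s) * r ^ (1 - s) = lam⁻¹ * u ^ (A⁻¹ - 2⁻¹) := by
      have e1 : A⁻¹ * (1 - s) = A⁻¹ - 2⁻¹ := by
        rw [hs_def]; field_simp
      rw [hr_def, Real.div_rpow (Real.rpow_nonneg hu.le _) hlam.le,
        ← Real.rpow_mul hu.le, e1, div_eq_mul_inv, ← Real.rpow_neg hlam.le]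
      have e2 : lam ^ (-s) * (u ^ (A⁻¹ - 2⁻¹) * lam ^ (-(1 - s)))
          = (lam ^ (-s) * lam ^ (-(1 - s))) * u ^ (A⁻¹ - 2⁻¹) := by ring
      rw [e2, ← Real.rpow_add hlam, show -s + -(1 - s) = -1 by ring, Real.rpow_neg_one]
    calc lam ^ (-s) * ∑' n : ℕ, (if N < n then (n : ℝ) ^ (-s) else 0)
        ≤ lam ^ (-s) * ((N:ℝ) ^ (1 - s)) :=
          mul_le_mul_of_nonneg_left htail.2 (Real.rpow_nonneg hlam.le _)
      _ ≤ lam ^ (-s) * r ^ (1 - s) :=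
          mul_le_mul_of_nonneg_left hNs (Real.rpow_nonneg hlam.le _)
      _ = lam⁻¹ * u ^ (A⁻¹ - 2⁻¹) := hfinal
  calc ∑' n : ℕ, (u + (lam * n) ^ A) ^ (-(2:ℝ)⁻¹)
      ≤ ∑' n, (h1 n + h2 n) := Summable.tsum_le_tsum hg_le hsumg (hsum1.add hsum2)
    _ = ∑' n, h1 n + ∑' n, h2 n := Summable.tsum_add hsum1 hsum2
    _ ≤ 3 * lam⁻¹ * u ^ (A⁻¹ - 2⁻¹) + lam⁻¹ * u ^ (A⁻¹ - 2⁻¹) := add_le_add ht1 ht2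
    _ = 4 * lam⁻¹ * u ^ (A⁻¹ - 2⁻¹) := by ring

lemma oneD_int {A u lam : ℝ} (hA : 4 < A) (hu : 0 < u) (hlam : 0 < lam)
    (hle : lam ≤ u ^ (A⁻¹)) :
    Summable (fun n : ℤ => (u + (lam * |(n:ℝ)|) ^ A) ^ (-(2:ℝ)⁻¹)) ∧
    ∑' n : ℤ, (u + (lam * |(n:ℝ)|) ^ A) ^ (-(2:ℝ)⁻¹) ≤ 8 * lam⁻¹ * u ^ (A⁻¹ - 2⁻¹) := by
  obtain ⟨hs, hb⟩ := oneD_nat hA hu hlam hle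
  set f : ℤ → ℝ := fun n => (u + (lam * |(n:ℝ)|) ^ A) ^ (-(2:ℝ)⁻¹) with f_def
  have hpos : ∀ n : ℤ, f n = (u + (lam * (n.natAbs : ℝ)) ^ A) ^ (-(2:ℝ)⁻¹) := by
    intro n
    simp only [f_def]
    congr 3
    rw [Nat.cast_natAbs, Int.cast_abs]
  have hnat : (fun n : ℕ => f (n : ℤ)) = fun n : ℕ => (u + (lam * n) ^ A) ^ (-(2:ℝ)⁻¹) := by
    funext n
    rw [hpos]
    norm_num
  have hneg : (fun n : ℕ => f (-((n : ℤ) + 1))) =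
      fun n : ℕ => (u + (lam * ((n:ℝ) + 1)) ^ A) ^ (-(2:ℝ)⁻¹) := by
    funext n
    simp only [f_def]
    have h : ((-((n:ℤ) + 1) : ℤ) : ℝ) = -((n:ℝ) + 1) := by push_cast; ring
    rw [h, abs_neg, abs_of_nonneg (by positivity)]
  have hsum_shift : Summable (fun n : ℕ => (u + (lam * ((n:ℝ) + 1)) ^ A) ^ (-(2:ℝ)⁻¹)) := by
    have := (summable_nat_add_iff 1).mpr hs
    apply this.congr
    intro n
    push_cast
    norm_num
  have hs1 : Summable (fun n : ℕ => f (n : ℤ)) := by rw [hnat]; exact hs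
  have hs2 : Summable (fun n : ℕ => f (-((n : ℤ) + 1))) := by rw [hneg]; exact hsum_shift
  have hsumf : Summable f := Summable.of_nat_of_neg_add_one hs1 hs2
  refine ⟨hsumf, ?_⟩
  have hfnn : ∀ n : ℕ, 0 ≤ (u + (lam * (n:ℝ)) ^ A) ^ (-(2:ℝ)⁻¹) :=
    fun n => Real.rpow_nonneg (by positivity) _
  have hshift_le : ∑' n : ℕ, (u + (lam * ((n:ℝ) + 1)) ^ A) ^ (-(2:ℝ)⁻¹)
      ≤ ∑' n : ℕ, (u + (lam * (n:ℝ)) ^ A) ^ (-(2:ℝ)⁻¹) := by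
    apply Summable.tsum_le_tsum_of_inj (fun n : ℕ => n + 1) (add_left_injective 1)
      (fun c _ => hfnn c) (fun n => by push_cast; norm_num) hsum_shift hs
  rw [tsum_of_nat_of_neg_add_one hs1 hs2, hnat, hneg]
  have h4 := hb
  calc ∑' n : ℕ, (u + (lam * (n:ℝ)) ^ A) ^ (-(2:ℝ)⁻¹)
        + ∑' n : ℕ, (u + (lam * ((n:ℝ) + 1)) ^ A) ^ (-(2:ℝ)⁻¹)
      ≤ (4 * lam⁻¹ * u ^ (A⁻¹ - 2⁻¹)) + (4 * lam⁻¹ * u ^ (A⁻¹ - 2⁻¹)) :=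
        add_le_add hb (le_trans hshift_le hb)
    _ = 8 * lam⁻¹ * u ^ (A⁻¹ - 2⁻¹) := by ring

noncomputable def uu (A lam1 : ℝ) (p : {v : Fin 2 → ℤ // v ≠ 0}) : ℝ := (lam1 * ‖p.1‖) ^ A

noncomputable def GG (A lam1 lam3 lam4 : ℝ) (z : {v : Fin 2 → ℤ // v ≠ 0} × ℤ × ℤ) : ℝ :=
  3 * ((uu A lam1 z.1 + (lam3 * |(z.2.1 : ℝ)|) ^ A) ^ (-(2:ℝ)⁻¹) *
       (uu A lam1 z.1 + (lam4 * |(z.2.2 : ℝ)|) ^ A) ^ (-(2:ℝ)⁻¹))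

noncomputable def psi (x : {x : Fin 4 → ℤ // ¬(x 0 = 0 ∧ x 1 = 0)}) :
    {v : Fin 2 → ℤ // v ≠ 0} × ℤ × ℤ :=
  (⟨![x.1 0, x.1 1], fun h => x.2 ⟨by simpa using congrFun h 0, by simpa using congrFun h 1⟩⟩,
   (x.1 2, x.1 3))


lemma one_le_norm {v : Fin 2 → ℤ} (hv : v ≠ 0) : 1 ≤ ‖v‖ := by
  rw [EisensteinSeries.norm_eq_max_natAbs]
  have h : max (v 0).natAbs (v 1).natAbs ≠ 0 := by
    simp only [ne_eq, Nat.max_eq_zero_iff, Int.natAbs_eq_zero]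
    rintro ⟨h0, h1⟩
    apply hv
    funext i
    fin_cases i <;> simp [h0, h1]
  exact_mod_cast Nat.one_le_iff_ne_zero.mpr h

lemma norm_cases (v : Fin 2 → ℤ) : ‖v‖ = |((v 0 : ℤ) : ℝ)| ∨ ‖v‖ = |((v 1 : ℤ) : ℝ)| := by
  rw [EisensteinSeries.norm_eq_max_natAbs]
  rcases max_choice (v 0).natAbs (v 1).natAbs with h | h <;> rw [h] <;>
    [left; right] <;> rw [Nat.cast_natAbs, Int.cast_abs]

lemma psi_injective : Function.Injective psi := by
  intro a b hab
  simp only [psi, Prod.mk.injEq, Subtype.mk.injEq] at hab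
  obtain ⟨h01, h2, h3⟩ := hab
  have h0 : a.1 0 = b.1 0 := by simpa using congrFun h01 0
  have h1 : a.1 1 = b.1 1 := by simpa using congrFun h01 1
  apply Subtype.ext
  funext i
  fin_cases i
  · exact h0
  · exact h1
  · exact h2
  · exact h3


lemma key_bound (A Q t : ℝ) (hA : 4 < A) (hQ : 1 ≤ Q) (ht : 1 ≤ t)
    (x : {x : Fin 4 → ℤ // ¬(x 0 = 0 ∧ x 1 = 0)}) :
    1 / (1 + Real.sqrt ((t ^ 3 * (x.1 0 : ℝ) / Q) ^ 2
        + (t * (x.1 1 : ℝ) / Q) ^ 2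
        + (t⁻¹ * (x.1 2 : ℝ) / Q) ^ 2
        + ((t ^ 3)⁻¹ * (x.1 3 : ℝ) / Q) ^ 2) ^ A)
      ≤ GG A (t / Q) (t⁻¹ / Q) ((t ^ 3) ⁻¹ / Q) (psi x) := by
  have hA0 : (0:ℝ) < A := by linarith
  have hQ0 : (0:ℝ) < Q := by linarith
  have ht0 : (0:ℝ) < t := by linarith
  set S : ℝ := (t ^ 3 * (x.1 0 : ℝ) / Q) ^ 2 + (t * (x.1 1 : ℝ) / Q) ^ 2
      + (t⁻¹ * (x.1 2 : ℝ) / Q) ^ 2 + ((t ^ 3)⁻¹ * (x.1 3 : ℝ) / Q) ^ 2 with S_def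
  have hSnn : 0 ≤ S := by positivity
  set E : ℝ := Real.sqrt S with E_def
  have hE0 : 0 ≤ E := Real.sqrt_nonneg _
  have hEA : 0 ≤ E ^ A := Real.rpow_nonneg hE0 _
  have htt : t ≤ t ^ 3 := by
    have h2 : 1 ≤ t ^ 2 := one_le_pow₀ ht
    calc t = t * 1 := by ring
      _ ≤ t * t ^ 2 := by gcongr
      _ = t ^ 3 := by ring
  have habs : ∀ a : ℝ, a ^ 2 ≤ S → |a| ≤ E := by
    intro a ha
    rw [E_def, ← Real.sqrt_sq_eq_abs]
    exact Real.sqrt_le_sqrt ha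
  have h0le : |t ^ 3 * (x.1 0 : ℝ) / Q| ≤ E := by
    apply habs; rw [S_def]
    nlinarith [sq_nonneg (t * (x.1 1 : ℝ) / Q), sq_nonneg (t⁻¹ * (x.1 2 : ℝ) / Q),
      sq_nonneg ((t ^ 3)⁻¹ * (x.1 3 : ℝ) / Q)]
  have h1le : |t * (x.1 1 : ℝ) / Q| ≤ E := by
    apply habs; rw [S_def]
    nlinarith [sq_nonneg (t ^ 3 * (x.1 0 : ℝ) / Q), sq_nonneg (t⁻¹ * (x.1 2 : ℝ) / Q),
      sq_nonneg ((t ^ 3)⁻¹ * (x.1 3 : ℝ) / Q)]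
  have h2le : |t⁻¹ * (x.1 2 : ℝ) / Q| ≤ E := by
    apply habs; rw [S_def]
    nlinarith [sq_nonneg (t ^ 3 * (x.1 0 : ℝ) / Q), sq_nonneg (t * (x.1 1 : ℝ) / Q),
      sq_nonneg ((t ^ 3)⁻¹ * (x.1 3 : ℝ) / Q)]
  have h3le : |(t ^ 3)⁻¹ * (x.1 3 : ℝ) / Q| ≤ E := by
    apply habs; rw [S_def]
    nlinarith [sq_nonneg (t ^ 3 * (x.1 0 : ℝ) / Q), sq_nonneg (t * (x.1 1 : ℝ) / Q),
      sq_nonneg (t⁻¹ * (x.1 2 : ℝ) / Q)]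
  -- the first component
  have hvnorm : (psi x).1.1 = ![x.1 0, x.1 1] := rfl
  have hm1 : 1 ≤ ‖(psi x).1.1‖ := one_le_norm (psi x).1.2
  have hmpos : 0 < (t / Q) * ‖(psi x).1.1‖ := by
    apply mul_pos (by positivity); linarith
  have hmE : (t / Q) * ‖(psi x).1.1‖ ≤ E := by
    rcases norm_cases (psi x).1.1 with h | h
    · rw [h, hvnorm]
      have e : ((![x.1 0, x.1 1] : Fin 2 → ℤ) 0 : ℝ) = (x.1 0 : ℝ) := by norm_num
      rw [e]
      calc (t / Q) * |(x.1 0 : ℝ)| = t * |(x.1 0 : ℝ)| / Q := by ring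
        _ ≤ t ^ 3 * |(x.1 0 : ℝ)| / Q := by gcongr
        _ = |t ^ 3 * (x.1 0 : ℝ) / Q| := by
            rw [abs_div, abs_mul, abs_of_nonneg (by positivity : (0:ℝ) ≤ t ^ 3),
              abs_of_nonneg hQ0.le]
        _ ≤ E := h0le
    · rw [h, hvnorm]
      have e : ((![x.1 0, x.1 1] : Fin 2 → ℤ) 1 : ℝ) = (x.1 1 : ℝ) := by norm_num
      rw [e]
      calc (t / Q) * |(x.1 1 : ℝ)| = t * |(x.1 1 : ℝ)| / Q := by ring
        _ = |t * (x.1 1 : ℝ) / Q| := by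
            rw [abs_div, abs_mul, abs_of_nonneg ht0.le, abs_of_nonneg hQ0.le]
        _ ≤ E := h1le
  set U : ℝ := uu A (t / Q) (psi x).1 with U_def
  have hU0 : 0 < U := Real.rpow_pos_of_pos hmpos _
  have hUE : U ≤ E ^ A := by
    rw [U_def, uu]
    exact Real.rpow_le_rpow hmpos.le hmE hA0.le
  set c3 : ℝ := ((t⁻¹ / Q) * |(x.1 2 : ℝ)|) ^ A with c3_def
  set c4 : ℝ := (((t ^ 3)⁻¹ / Q) * |(x.1 3 : ℝ)|) ^ A with c4_def
  have hc3nn : 0 ≤ c3 := Real.rpow_nonneg (by positivity) _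
  have hc4nn : 0 ≤ c4 := Real.rpow_nonneg (by positivity) _
  have h3E : c3 ≤ E ^ A := by
    rw [c3_def]
    apply Real.rpow_le_rpow (by positivity) _ hA0.le
    calc (t⁻¹ / Q) * |(x.1 2 : ℝ)| = t⁻¹ * |(x.1 2 : ℝ)| / Q := by ring
      _ = |t⁻¹ * (x.1 2 : ℝ) / Q| := by
          rw [abs_div, abs_mul, abs_of_nonneg (by positivity : (0:ℝ) ≤ t⁻¹), abs_of_nonneg hQ0.le]
      _ ≤ E := h2le
  have h4E : c4 ≤ E ^ A := by
    rw [c4_def]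
    apply Real.rpow_le_rpow (by positivity) _ hA0.le
    calc ((t ^ 3)⁻¹ / Q) * |(x.1 3 : ℝ)| = (t ^ 3)⁻¹ * |(x.1 3 : ℝ)| / Q := by ring
      _ = |(t ^ 3)⁻¹ * (x.1 3 : ℝ) / Q| := by
          rw [abs_div, abs_mul, abs_of_nonneg (by positivity : (0:ℝ) ≤ (t ^ 3)⁻¹),
            abs_of_nonneg hQ0.le]
      _ ≤ E := h3le
  have hGval : GG A (t / Q) (t⁻¹ / Q) ((t ^ 3)⁻¹ / Q) (psi x)
      = 3 * ((U + c3) ^ (-(2:ℝ)⁻¹) * (U + c4) ^ (-(2:ℝ)⁻¹)) := by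
    rw [U_def, c3_def, c4_def]; rfl
  have hW3 : 0 < U + c3 := by linarith
  have hW4 : 0 < U + c4 := by linarith
  have hsqW : Real.sqrt ((U + c3) * (U + c4)) ≤ 3 * (1 + E ^ A) := by
    have h1 : (U + c3) * (U + c4) ≤ (U + c3 + c4) ^ 2 := by nlinarith
    calc Real.sqrt ((U + c3) * (U + c4)) ≤ Real.sqrt ((U + c3 + c4) ^ 2) :=
          Real.sqrt_le_sqrt h1
      _ = U + c3 + c4 := Real.sqrt_sq (by linarith)
      _ ≤ 3 * (1 + E ^ A) := by linarith
  have hWsqrt : (U + c3) ^ (-(2:ℝ)⁻¹) * (U + c4) ^ (-(2:ℝ)⁻¹)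
      = (Real.sqrt ((U + c3) * (U + c4)))⁻¹ := by
    rw [← Real.mul_rpow hW3.le hW4.le, Real.rpow_neg (by positivity), Real.sqrt_eq_rpow]
    norm_num
  rw [hGval, hWsqrt]
  have hDpos : 0 < Real.sqrt ((U + c3) * (U + c4)) := Real.sqrt_pos.mpr (by positivity)
  rw [show (3:ℝ) * (Real.sqrt ((U + c3) * (U + c4)))⁻¹
      = 3 / Real.sqrt ((U + c3) * (U + c4)) by rw [div_eq_mul_inv]]
  rw [div_le_div_iff₀ (by positivity) hDpos, one_mul]
  exact le_trans hsqW (by nlinarith)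

lemma main_aux (A : ℝ) (hA : 4 < A) (Q : ℝ) (hQ : 1 ≤ Q) (t : ℝ) (ht : 1 ≤ t) :
    Summable (fun x : {x : Fin 4 → ℤ // ¬(x 0 = 0 ∧ x 1 = 0)} =>
      1 / (1 + Real.sqrt ((t ^ 3 * (x.1 0 : ℝ) / Q) ^ 2
        + (t * (x.1 1 : ℝ) / Q) ^ 2
        + (t⁻¹ * (x.1 2 : ℝ) / Q) ^ 2
        + ((t ^ 3)⁻¹ * (x.1 3 : ℝ) / Q) ^ 2) ^ A)) ∧
    (∑' x : {x : Fin 4 → ℤ // ¬(x 0 = 0 ∧ x 1 = 0)},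
      1 / (1 + Real.sqrt ((t ^ 3 * (x.1 0 : ℝ) / Q) ^ 2
        + (t * (x.1 1 : ℝ) / Q) ^ 2
        + (t⁻¹ * (x.1 2 : ℝ) / Q) ^ 2
        + ((t ^ 3)⁻¹ * (x.1 3 : ℝ) / Q) ^ 2) ^ A))
      ≤ (192 * Q ^ A * ∑' v : {v : Fin 2 → ℤ // v ≠ 0}, ‖v.1‖ ^ (-(A - 2))) * t ^ (-(A - 6)) := by
  have hA0 : (0:ℝ) < A := by linarith
  have hAne : A ≠ 0 := ne_of_gt hA0
  have hQ0 : (0:ℝ) < Q := by linarith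
  have ht0 : (0:ℝ) < t := by linarith
  set lam1 : ℝ := t / Q with lam1_def
  set lam3 : ℝ := t⁻¹ / Q with lam3_def
  set lam4 : ℝ := (t ^ 3)⁻¹ / Q with lam4_def
  have hlam1 : 0 < lam1 := by positivity
  have hlam3 : 0 < lam3 := by positivity
  have hlam4 : 0 < lam4 := by positivity
  -- basic facts about uu
  have hm1 : ∀ p : {v : Fin 2 → ℤ // v ≠ 0}, 1 ≤ ‖p.1‖ := fun p => one_le_norm p.2
  have hmpos : ∀ p : {v : Fin 2 → ℤ // v ≠ 0}, 0 < lam1 * ‖p.1‖ :=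
    fun p => mul_pos hlam1 (lt_of_lt_of_le one_pos (hm1 p))
  have hu : ∀ p : {v : Fin 2 → ℤ // v ≠ 0}, 0 < uu A lam1 p :=
    fun p => Real.rpow_pos_of_pos (hmpos p) _
  have huroot : ∀ p : {v : Fin 2 → ℤ // v ≠ 0}, (uu A lam1 p) ^ (A⁻¹) = lam1 * ‖p.1‖ := by
    intro p
    rw [uu, ← Real.rpow_mul (hmpos p).le, mul_inv_cancel₀ hAne, Real.rpow_one]
  have hle3 : ∀ p : {v : Fin 2 → ℤ // v ≠ 0}, lam3 ≤ (uu A lam1 p) ^ (A⁻¹) := by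
    intro p
    rw [huroot]
    calc lam3 = t⁻¹ / Q := lam3_def
      _ ≤ t / Q := by gcongr; · exact le_trans (inv_le_one_of_one_le₀ ht) ht
      _ ≤ (t / Q) * ‖p.1‖ := le_mul_of_one_le_right (by positivity) (hm1 p)
  have hle4 : ∀ p : {v : Fin 2 → ℤ // v ≠ 0}, lam4 ≤ (uu A lam1 p) ^ (A⁻¹) := by
    intro p
    rw [huroot]
    calc lam4 = (t ^ 3)⁻¹ / Q := lam4_def
      _ ≤ t / Q := by
          gcongr
          calc (t ^ 3)⁻¹ ≤ 1 := inv_le_one_of_one_le₀ (one_le_pow₀ ht)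
            _ ≤ t := ht
      _ ≤ (t / Q) * ‖p.1‖ := le_mul_of_one_le_right (by positivity) (hm1 p)
  -- one-dimensional sums
  have hT3 := fun p : {v : Fin 2 → ℤ // v ≠ 0} => oneD_int hA (hu p) hlam3 (hle3 p)
  have hT4 := fun p : {v : Fin 2 → ℤ // v ≠ 0} => oneD_int hA (hu p) hlam4 (hle4 p)
  set F3 : {v : Fin 2 → ℤ // v ≠ 0} → ℤ → ℝ :=
    fun p n => (uu A lam1 p + (lam3 * |(n:ℝ)|) ^ A) ^ (-(2:ℝ)⁻¹) with F3_def
  set F4 : {v : Fin 2 → ℤ // v ≠ 0} → ℤ → ℝ :=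
    fun p n => (uu A lam1 p + (lam4 * |(n:ℝ)|) ^ A) ^ (-(2:ℝ)⁻¹) with F4_def
  have hF3nn : ∀ p n, 0 ≤ F3 p n := fun p n =>
    Real.rpow_nonneg (add_nonneg (hu p).le (Real.rpow_nonneg (by positivity) _)) _
  have hF4nn : ∀ p n, 0 ≤ F4 p n := fun p n =>
    Real.rpow_nonneg (add_nonneg (hu p).le (Real.rpow_nonneg (by positivity) _)) _
  have hGnn : ∀ z, 0 ≤ GG A lam1 lam3 lam4 z := by
    intro z
    have := hF3nn z.1 z.2.1
    have := hF4nn z.1 z.2.2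
    have : 0 ≤ F3 z.1 z.2.1 * F4 z.1 z.2.2 := mul_nonneg (hF3nn _ _) (hF4nn _ _)
    rw [GG]
    positivity
  -- fiberwise summability and sums
  have hprod : ∀ p, Summable (fun y : ℤ × ℤ => F3 p y.1 * F4 p y.2) :=
    fun p => Summable.mul_of_nonneg (hT3 p).1 (hT4 p).1 (hF3nn p) (hF4nn p)
  have hfib : ∀ p, Summable (fun y : ℤ × ℤ => GG A lam1 lam3 lam4 (p, y)) := by
    intro p
    exact ((hprod p).mul_left 3).congr (fun y => rfl)
  have hfibsum : ∀ p, ∑' y : ℤ × ℤ, GG A lam1 lam3 lam4 (p, y)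
      = 3 * ((∑' n, F3 p n) * (∑' n, F4 p n)) := by
    intro p
    have e0 : ∑' y : ℤ × ℤ, GG A lam1 lam3 lam4 (p, y)
        = ∑' y : ℤ × ℤ, 3 * (F3 p y.1 * F4 p y.2) := rfl
    rw [e0, tsum_mul_left]
    congr 1
    rw [Summable.tsum_prod' (hprod p) (fun a => ((hT4 p).1.mul_left (F3 p a)))]
    have e1 : ∀ a : ℤ, ∑' b : ℤ, F3 p a * F4 p b = F3 p a * ∑' n, F4 p n :=
      fun a => tsum_mul_left
    rw [tsum_congr e1]
    exact tsum_mul_right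
  -- bound on the fiber sums
  set c : ℝ := A⁻¹ - 2⁻¹ with c_def
  set KK : ℝ := 192 * (lam3⁻¹ * lam4⁻¹ * lam1 ^ (2 - A)) with KK_def
  have huc : ∀ p, (uu A lam1 p) ^ c * (uu A lam1 p) ^ c
      = lam1 ^ (2 - A) * ‖p.1‖ ^ (-(A - 2)) := by
    intro p
    rw [← Real.rpow_add (hu p), uu, ← Real.rpow_mul (hmpos p).le]
    have e : A * (c + c) = 2 - A := by rw [c_def]; field_simp; ring
    rw [e, Real.mul_rpow hlam1.le (norm_nonneg p.1)]
    congr 1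
    congr 1
    ring
  have hfible : ∀ p, 3 * ((∑' n, F3 p n) * (∑' n, F4 p n)) ≤ KK * ‖p.1‖ ^ (-(A - 2)) := by
    intro p
    have h3 := (hT3 p).2
    have h4 := (hT4 p).2
    have h34 : (∑' n, F3 p n) * (∑' n, F4 p n)
        ≤ (8 * lam3⁻¹ * (uu A lam1 p) ^ c) * (8 * lam4⁻¹ * (uu A lam1 p) ^ c) := by
      have h8 : (0:ℝ) ≤ 8 * lam3⁻¹ * (uu A lam1 p) ^ c :=
        mul_nonneg (by positivity) (Real.rpow_nonneg (hu p).le _)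
      apply mul_le_mul h3 h4 (tsum_nonneg (hF4nn p)) h8
    have e2 : (8 * lam3⁻¹ * (uu A lam1 p) ^ c) * (8 * lam4⁻¹ * (uu A lam1 p) ^ c)
        = 64 * (lam3⁻¹ * lam4⁻¹) * ((uu A lam1 p) ^ c * (uu A lam1 p) ^ c) := by ring
    have e3 : 64 * (lam3⁻¹ * lam4⁻¹) * (lam1 ^ (2 - A) * ‖p.1‖ ^ (-(A - 2)))
        = (64 * (lam3⁻¹ * lam4⁻¹ * lam1 ^ (2 - A))) * ‖p.1‖ ^ (-(A - 2)) := by ring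
    have : (∑' n, F3 p n) * (∑' n, F4 p n)
        ≤ (64 * (lam3⁻¹ * lam4⁻¹ * lam1 ^ (2 - A))) * ‖p.1‖ ^ (-(A - 2)) := by
      rw [← e3, ← huc p, ← e2]; exact h34
    calc 3 * ((∑' n, F3 p n) * (∑' n, F4 p n))
        ≤ 3 * ((64 * (lam3⁻¹ * lam4⁻¹ * lam1 ^ (2 - A))) * ‖p.1‖ ^ (-(A - 2))) := by
          apply mul_le_mul_of_nonneg_left this (by norm_num)
      _ = KK * ‖p.1‖ ^ (-(A - 2)) := by rw [KK_def]; ring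
  -- summability of the norm sum
  have hS0 : Summable (fun p : {v : Fin 2 → ℤ // v ≠ 0} => ‖p.1‖ ^ (-(A - 2))) := by
    have h := (EisensteinSeries.summable_one_div_norm_rpow (by linarith : (2:ℝ) < A - 2))
    exact h.subtype {v : Fin 2 → ℤ | v ≠ 0}
  have hS0nn : (0:ℝ) ≤ ∑' v : {v : Fin 2 → ℤ // v ≠ 0}, ‖v.1‖ ^ (-(A - 2)) :=
    tsum_nonneg (fun p => Real.rpow_nonneg (norm_nonneg _) _)
  -- summability of GG
  have hGsum : Summable (GG A lam1 lam3 lam4) := by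
    apply (summable_prod_of_nonneg hGnn).mpr
    refine ⟨hfib, ?_⟩
    apply Summable.of_nonneg_of_le (fun p => tsum_nonneg (fun y => hGnn (p, y)))
      (fun p => ?_) (hS0.mul_left KK)
    rw [hfibsum p]
    exact hfible p
  have hGtsum : ∑' z, GG A lam1 lam3 lam4 z
      ≤ KK * ∑' v : {v : Fin 2 → ℤ // v ≠ 0}, ‖v.1‖ ^ (-(A - 2)) := by
    rw [Summable.tsum_prod' hGsum hfib]
    calc ∑' p, ∑' y : ℤ × ℤ, GG A lam1 lam3 lam4 (p, y)
        ≤ ∑' p : {v : Fin 2 → ℤ // v ≠ 0}, KK * ‖p.1‖ ^ (-(A - 2)) := by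
          apply Summable.tsum_le_tsum _ _ (hS0.mul_left KK)
          · intro p; rw [hfibsum p]; exact hfible p
          · apply Summable.of_nonneg_of_le (fun p => tsum_nonneg (fun y => hGnn (p, y)))
              (fun p => ?_) (hS0.mul_left KK)
            rw [hfibsum p]; exact hfible p
      _ = KK * ∑' v : {v : Fin 2 → ℤ // v ≠ 0}, ‖v.1‖ ^ (-(A - 2)) := tsum_mul_left
  -- comparison with the original sum
  have key : ∀ x : {x : Fin 4 → ℤ // ¬(x 0 = 0 ∧ x 1 = 0)},
      1 / (1 + Real.sqrt ((t ^ 3 * (x.1 0 : ℝ) / Q) ^ 2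
        + (t * (x.1 1 : ℝ) / Q) ^ 2
        + (t⁻¹ * (x.1 2 : ℝ) / Q) ^ 2
        + ((t ^ 3)⁻¹ * (x.1 3 : ℝ) / Q) ^ 2) ^ A)
      ≤ GG A lam1 lam3 lam4 (psi x) := by
    rw [lam1_def, lam3_def, lam4_def]
    exact fun x => key_bound A Q t hA hQ ht x
  have hfnn : ∀ x : {x : Fin 4 → ℤ // ¬(x 0 = 0 ∧ x 1 = 0)},
      0 ≤ 1 / (1 + Real.sqrt ((t ^ 3 * (x.1 0 : ℝ) / Q) ^ 2
        + (t * (x.1 1 : ℝ) / Q) ^ 2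
        + (t⁻¹ * (x.1 2 : ℝ) / Q) ^ 2
        + ((t ^ 3)⁻¹ * (x.1 3 : ℝ) / Q) ^ 2) ^ A) := by
    intro x
    have h1 : 0 ≤ Real.sqrt ((t ^ 3 * (x.1 0 : ℝ) / Q) ^ 2
        + (t * (x.1 1 : ℝ) / Q) ^ 2
        + (t⁻¹ * (x.1 2 : ℝ) / Q) ^ 2
        + ((t ^ 3)⁻¹ * (x.1 3 : ℝ) / Q) ^ 2) ^ A :=
      Real.rpow_nonneg (Real.sqrt_nonneg _) _
    positivity
  have hfsum : Summable (fun x : {x : Fin 4 → ℤ // ¬(x 0 = 0 ∧ x 1 = 0)} =>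
      1 / (1 + Real.sqrt ((t ^ 3 * (x.1 0 : ℝ) / Q) ^ 2
        + (t * (x.1 1 : ℝ) / Q) ^ 2
        + (t⁻¹ * (x.1 2 : ℝ) / Q) ^ 2
        + ((t ^ 3)⁻¹ * (x.1 3 : ℝ) / Q) ^ 2) ^ A)) :=
    Summable.of_nonneg_of_le hfnn key (hGsum.comp_injective psi_injective)
  refine ⟨hfsum, ?_⟩
  have hKK : lam3⁻¹ * lam4⁻¹ * lam1 ^ (2 - A) = Q ^ A * t ^ (-(A - 6)) := by
    have h3i : lam3⁻¹ = Q * t := by rw [lam3_def]; field_simp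
    have h4i : lam4⁻¹ = Q * t ^ 3 := by rw [lam4_def]; field_simp
    have h1p : lam1 ^ (2 - A) = t ^ (2 - A) * Q ^ (A - 2) := by
      rw [lam1_def, Real.div_rpow ht0.le hQ0.le, div_eq_mul_inv, ← Real.rpow_neg hQ0.le, neg_sub]
    have hQA : Q ^ (2:ℕ) * Q ^ (A - 2) = Q ^ A := by
      rw [← Real.rpow_natCast Q 2, ← Real.rpow_add hQ0]
      norm_num
    have ht6 : t ^ (4:ℕ) * t ^ (2 - A) = t ^ (-(A - 6)) := by
      rw [← Real.rpow_natCast t 4, ← Real.rpow_add ht0]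
      congr 1
      push_cast
      ring
    rw [h3i, h4i, h1p, ← hQA, ← ht6]
    ring
  calc ∑' x : {x : Fin 4 → ℤ // ¬(x 0 = 0 ∧ x 1 = 0)},
      1 / (1 + Real.sqrt ((t ^ 3 * (x.1 0 : ℝ) / Q) ^ 2
        + (t * (x.1 1 : ℝ) / Q) ^ 2
        + (t⁻¹ * (x.1 2 : ℝ) / Q) ^ 2
        + ((t ^ 3)⁻¹ * (x.1 3 : ℝ) / Q) ^ 2) ^ A)
      ≤ ∑' z, GG A lam1 lam3 lam4 z :=
        Summable.tsum_le_tsum_of_inj psi psi_injective (fun c _ => hGnn c) key hfsum hGsum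
    _ ≤ KK * ∑' v : {v : Fin 2 → ℤ // v ≠ 0}, ‖v.1‖ ^ (-(A - 2)) := hGtsum
    _ = (192 * Q ^ A * ∑' v : {v : Fin 2 → ℤ // v ≠ 0}, ‖v.1‖ ^ (-(A - 2))) * t ^ (-(A - 6)) := by
        rw [KK_def, hKK]
        ring


/-- For `A > 4` and `q ≥ 1` there is `C = C(A,q)` such that for all `t ≥ 1`, the sum over
integer quadruples `(x₁,x₂,x₃,x₄)` with `(x₁,x₂) ≠ (0,0)` of
`1/(1 + ‖(t³x₁/q², t x₂/q², t⁻¹x₃/q², t⁻³x₄/q²)‖₂^A)` converges and is at most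
`C · t^{−(A−6)}`. -/
theorem lattice_sum_decay (A : ℝ) (hA : 4 < A) (q : ℕ) (hq : 1 ≤ q) :
    ∃ C : ℝ, ∀ t : ℝ, 1 ≤ t →
      Summable (fun x : {x : Fin 4 → ℤ // ¬(x 0 = 0 ∧ x 1 = 0)} =>
        1 / (1 + Real.sqrt ((t ^ 3 * (x.1 0 : ℝ) / (q : ℝ) ^ 2) ^ 2
          + (t * (x.1 1 : ℝ) / (q : ℝ) ^ 2) ^ 2
          + (t⁻¹ * (x.1 2 : ℝ) / (q : ℝ) ^ 2) ^ 2
          + ((t ^ 3)⁻¹ * (x.1 3 : ℝ) / (q : ℝ) ^ 2) ^ 2) ^ A)) ∧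
      (∑' x : {x : Fin 4 → ℤ // ¬(x 0 = 0 ∧ x 1 = 0)},
        1 / (1 + Real.sqrt ((t ^ 3 * (x.1 0 : ℝ) / (q : ℝ) ^ 2) ^ 2
          + (t * (x.1 1 : ℝ) / (q : ℝ) ^ 2) ^ 2
          + (t⁻¹ * (x.1 2 : ℝ) / (q : ℝ) ^ 2) ^ 2
          + ((t ^ 3)⁻¹ * (x.1 3 : ℝ) / (q : ℝ) ^ 2) ^ 2) ^ A))
        ≤ C * t ^ (-(A - 6)) := by
  have hQ : (1:ℝ) ≤ (q : ℝ) ^ 2 := by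
    have h1 : (1:ℝ) ≤ (q : ℝ) := by exact_mod_cast hq
    nlinarith
  exact ⟨192 * ((q : ℝ) ^ 2) ^ A * ∑' v : {v : Fin 2 → ℤ // v ≠ 0}, ‖v.1‖ ^ (-(A - 2)),
    fun t ht => main_aux A hA ((q : ℝ) ^ 2) hQ t ht⟩
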